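/- arXiv:0908.1847 — 5 statements merged into one kernel-verified Lean document; each statement's English description precedes it below -/
import Mathlib

section
/- Let m, l ≥ 2 be integers and define h : ℝ² → ℝ by h(x) = x₁^m · x₂^l. Then for every u > 0 there exists a constant A > 0 (depending on u, m, l) such that for all x, y ∈ ℝ²: |h(x + y) − h(x)| ≤ u·|h(x)| + A·(|x₁|^m·|y₂|^l + |y₁|^m·|x₂|^l + |y₁|^m·|y₂|^l). -/
/-- `(1+t)^m ≤ 1 + 2^m * t` for `0 ≤ t ≤ 1`. -/
lemma aux_one_add_pow (m : ℕ) {t : ℝ} (h0 : 0 ≤ t) (h1 : t ≤ 1) :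
    (1 + t) ^ m ≤ 1 + (2 ^ m - 1) * t := by
  induction m with
  | zero => simp
  | succ n ih =>
    have h2 : (1:ℝ) ≤ 2 ^ n := one_le_pow₀ one_le_two
    have ht2 : t * t ≤ t := by nlinarith
    have h3 : (2 ^ n - 1) * (t * t) ≤ (2 ^ n - 1) * t :=
      mul_le_mul_of_nonneg_left ht2 (by linarith)
    calc (1 + t) ^ (n+1) = (1 + t) ^ n * (1 + t) := by ring
    _ ≤ (1 + (2 ^ n - 1) * t) * (1 + t) := by
        apply mul_le_mul_of_nonneg_right ih (by linarith)
    _ ≤ 1 + (2 ^ (n+1) - 1) * t := by ring_nf; ring_nf at h3; nlinarith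

/-- One-variable perturbation bound. -/
lemma aux_one_var (m : ℕ) (hm : 1 ≤ m) (ε : ℝ) (hε : 0 < ε) :
    ∃ C : ℝ, 0 < C ∧ ∀ a b : ℝ, |(a + b) ^ m - a ^ m| ≤ ε * |a| ^ m + C * |b| ^ m := by
  set t : ℝ := min (ε / 2 ^ m) 1 with ht
  have ht0 : 0 < t := lt_min (by positivity) one_pos
  have ht1 : t ≤ 1 := min_le_right _ _
  have htε : 2 ^ m * t ≤ ε := by
    have : t ≤ ε / 2 ^ m := min_le_left _ _
    rw [le_div_iff₀ (by positivity)] at this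
    linarith
  refine ⟨(1 + 1 / t) ^ m + (1 / t) ^ m, by positivity, fun a b => ?_⟩
  rcases le_or_gt |b| (t * |a|) with hb | hb
  · -- small perturbation case
    have haa : 0 ≤ |a| := abs_nonneg a
    have key : |(a + b) ^ m - a ^ m| ≤ ((1 + t) ^ m - 1) * |a| ^ m := by
      have hsum : (a + b) ^ m - a ^ m =
          ∑ k ∈ Finset.range m, a ^ k * b ^ (m - k) * (m.choose k : ℝ) := by
        have := add_pow a b m
        rw [Finset.sum_range_succ] at this
        simp only [Nat.sub_self, pow_zero, Nat.choose_self, Nat.cast_one, mul_one] at this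
        linarith
      have hsum2 : ((1 + t) ^ m - 1) * |a| ^ m =
          ∑ k ∈ Finset.range m, t ^ (m - k) * (m.choose k : ℝ) * |a| ^ m := by
        have := add_pow (1:ℝ) t m
        rw [Finset.sum_range_succ] at this
        simp only [Nat.sub_self, pow_zero, Nat.choose_self, Nat.cast_one, mul_one,
          one_pow, one_mul] at this
        rw [← Finset.sum_mul]
        rw [this]; ring
      rw [hsum, hsum2]
      refine (Finset.abs_sum_le_sum_abs _ _).trans (Finset.sum_le_sum fun k hk => ?_)
      rw [Finset.mem_range] at hk
      rw [abs_mul, abs_mul, abs_pow, abs_pow, Nat.abs_cast]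
      have h1 : |b| ^ (m - k) ≤ (t * |a|) ^ (m - k) :=
        pow_le_pow_left₀ (abs_nonneg b) hb _
      have h2 : |a| ^ k * (t * |a|) ^ (m - k) = t ^ (m - k) * |a| ^ m := by
        rw [mul_pow, ← mul_assoc, mul_comm (|a| ^ k), mul_assoc, ← pow_add]
        congr 2
        omega
      calc |a| ^ k * |b| ^ (m - k) * (m.choose k : ℝ)
          ≤ |a| ^ k * (t * |a|) ^ (m - k) * (m.choose k : ℝ) := by
            apply mul_le_mul_of_nonneg_right _ (Nat.cast_nonneg _)
            exact mul_le_mul_of_nonneg_left h1 (by positivity)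
        _ = t ^ (m - k) * (m.choose k : ℝ) * |a| ^ m := by rw [h2]; ring
    have h3 : (1 + t) ^ m - 1 ≤ ε := by
      have h4 := aux_one_add_pow m ht0.le ht1
      have h5 : ((2:ℝ) ^ m - 1) * t ≤ 2 ^ m * t := by nlinarith
      linarith
    have hCb : 0 ≤ ((1 + 1 / t) ^ m + (1 / t) ^ m) * |b| ^ m := by positivity
    calc |(a + b) ^ m - a ^ m| ≤ ((1 + t) ^ m - 1) * |a| ^ m := key
      _ ≤ ε * |a| ^ m := mul_le_mul_of_nonneg_right h3 (by positivity)
      _ ≤ _ := by linarith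
  · -- large perturbation case
    have ha : |a| ≤ (1 / t) * |b| := by
      rw [one_div, inv_mul_eq_div, le_div_iff₀ ht0, mul_comm]
      exact hb.le
    have habs : |(a + b) ^ m - a ^ m| ≤ (1 + 1 / t) ^ m * |b| ^ m + (1 / t) ^ m * |b| ^ m := by
      have h1 : |(a + b) ^ m| ≤ (1 + 1 / t) ^ m * |b| ^ m := by
        rw [abs_pow, ← mul_pow]
        apply pow_le_pow_left₀ (abs_nonneg _)
        calc |a + b| ≤ |a| + |b| := abs_add_le a b
          _ ≤ (1 / t) * |b| + |b| := by linarith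
          _ = (1 + 1 / t) * |b| := by ring
      have h2 : |a ^ m| ≤ (1 / t) ^ m * |b| ^ m := by
        rw [abs_pow, ← mul_pow]
        exact pow_le_pow_left₀ (abs_nonneg _) ha _
      calc |(a + b) ^ m - a ^ m| ≤ |(a + b) ^ m| + |a ^ m| := abs_sub _ _
        _ ≤ _ := by linarith
    have hε' : 0 ≤ ε * |a| ^ m := by positivity
    calc |(a + b) ^ m - a ^ m| ≤ (1 + 1 / t) ^ m * |b| ^ m + (1 / t) ^ m * |b| ^ m := habs
      _ = ((1 + 1 / t) ^ m + (1 / t) ^ m) * |b| ^ m := by ring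
      _ ≤ _ := by linarith

/-- Let `m, l ≥ 2` be integers and `h(x) = x₁^m · x₂^l` on `ℝ²`. For every `u > 0` there is a
constant `A > 0` such that for all `x, y ∈ ℝ²`:
`|h(x+y) − h(x)| ≤ u·|h(x)| + A·(|x₁|^m·|y₂|^l + |y₁|^m·|x₂|^l + |y₁|^m·|y₂|^l)`. -/
theorem monomial_perturbation_bound (m l : ℕ) (hm : 2 ≤ m) (hl : 2 ≤ l)
    (u : ℝ) (hu : 0 < u) :
    ∃ A : ℝ, 0 < A ∧ ∀ x y : ℝ × ℝ,
      |(x.1 + y.1) ^ m * (x.2 + y.2) ^ l - x.1 ^ m * x.2 ^ l| ≤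
        u * |x.1 ^ m * x.2 ^ l| +
          A * (|x.1| ^ m * |y.2| ^ l + |y.1| ^ m * |x.2| ^ l + |y.1| ^ m * |y.2| ^ l) := by
  set K : ℝ := 2 ^ (l - 1) with hK
  have hK0 : 0 < K := by positivity
  set ε : ℝ := u / (K + 1) with hε
  have hε0 : 0 < ε := by positivity
  have hεu : ε * (K + 1) = u := by
    rw [hε, div_mul_cancel₀ _ (by positivity)]
  obtain ⟨C₁, hC₁, H₁⟩ := aux_one_var m (by omega) ε hε0
  obtain ⟨C₂, hC₂, H₂⟩ := aux_one_var l (by omega) ε hε0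
  refine ⟨ε * K + C₂ + C₁ * K, by positivity, fun x y => ?_⟩
  obtain ⟨a, c⟩ := x
  obtain ⟨b, d⟩ := y
  simp only
  -- basic abbreviations
  have hcd : |c + d| ^ l ≤ K * (|c| ^ l + |d| ^ l) := by
    calc |c + d| ^ l ≤ (|c| + |d|) ^ l :=
          pow_le_pow_left₀ (abs_nonneg _) (abs_add_le c d) _
      _ ≤ K * (|c| ^ l + |d| ^ l) := add_pow_le (abs_nonneg c) (abs_nonneg d) l
  have h1 := H₁ a b
  have h2 := H₂ c d
  have key : |(a + b) ^ m * (c + d) ^ l - a ^ m * c ^ l| ≤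
      |(a + b) ^ m - a ^ m| * |c + d| ^ l + |a| ^ m * |(c + d) ^ l - c ^ l| := by
    have : (a + b) ^ m * (c + d) ^ l - a ^ m * c ^ l =
        ((a + b) ^ m - a ^ m) * (c + d) ^ l + a ^ m * ((c + d) ^ l - c ^ l) := by ring
    rw [this]
    calc _ ≤ |((a + b) ^ m - a ^ m) * (c + d) ^ l| + |a ^ m * ((c + d) ^ l - c ^ l)| :=
          abs_add_le _ _
      _ = _ := by rw [abs_mul, abs_mul, abs_pow, abs_pow]
  have hstep1 : |(a + b) ^ m - a ^ m| * |c + d| ^ l ≤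
      (ε * |a| ^ m + C₁ * |b| ^ m) * (K * (|c| ^ l + |d| ^ l)) := by
    apply mul_le_mul h1 hcd (by positivity) (by positivity)
  have hstep2 : |a| ^ m * |(c + d) ^ l - c ^ l| ≤
      |a| ^ m * (ε * |c| ^ l + C₂ * |d| ^ l) :=
    mul_le_mul_of_nonneg_left h2 (by positivity)
  have habs : |a ^ m * c ^ l| = |a| ^ m * |c| ^ l := by
    rw [abs_mul, abs_pow, abs_pow]
  rw [habs] at *
  have P1 : (0:ℝ) ≤ |a| ^ m * |c| ^ l := by positivity
  have P2 : (0:ℝ) ≤ |a| ^ m * |d| ^ l := by positivity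
  have P3 : (0:ℝ) ≤ |b| ^ m * |c| ^ l := by positivity
  have P4 : (0:ℝ) ≤ |b| ^ m * |d| ^ l := by positivity
  have huP1 : u * (|a| ^ m * |c| ^ l) =
      ε * K * (|a| ^ m * |c| ^ l) + ε * (|a| ^ m * |c| ^ l) := by
    rw [← hεu]; ring
  nlinarith [key, hstep1, hstep2, huP1,
    mul_nonneg (mul_nonneg hC₁.le hK0.le) P2,
    mul_nonneg (mul_nonneg hε0.le hK0.le) P3, mul_nonneg hC₂.le P3,
    mul_nonneg (mul_nonneg hε0.le hK0.le) P4, mul_nonneg hC₂.le P4]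
end

section
/- There exists a universal constant K > 0 with the following property: for all integers u, v ≥ 0 with u + v ≥ 2, all real numbers δ ∈ (0, 1] and ρ ∈ (0, 1/2], and all x, y ∈ ℝ², if δ < ‖x + y‖ ≤ 2ρ then |(x₁ + y₁)^u · (x₂ + y₂)^v| ≤ K·(‖x‖⁴/δ² + min(‖y‖², ρ²)). -/
lemma coord_abs_le_norm (z : EuclideanSpace ℝ (Fin 2)) (i : Fin 2) : |z i| ≤ ‖z‖ := by
  rw [EuclideanSpace.norm_eq, ← Real.sqrt_sq_eq_abs]
  apply Real.sqrt_le_sqrt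
  rw [Fin.sum_univ_two]
  fin_cases i <;> simp [Real.norm_eq_abs, sq_abs] <;> positivity

set_option maxHeartbeats 800000 in
/-- There is a universal constant `K > 0` such that for all integers `u, v ≥ 0` with `u + v ≥ 2`,
all `δ ∈ (0, 1]` and `ρ ∈ (0, 1/2]`, and all `x, y ∈ ℝ²` (Euclidean norm), if
`δ < ‖x + y‖ ≤ 2ρ` then `|(x₁+y₁)^u · (x₂+y₂)^v| ≤ K·(‖x‖⁴/δ² + min(‖y‖², ρ²))`. -/
theorem truncated_monomial_bound :
    ∃ K : ℝ, 0 < K ∧ ∀ (u v : ℕ), 2 ≤ u + v → ∀ (δ ρ : ℝ),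
      0 < δ → δ ≤ 1 → 0 < ρ → ρ ≤ 1 / 2 → ∀ x y : EuclideanSpace ℝ (Fin 2),
        δ < ‖x + y‖ → ‖x + y‖ ≤ 2 * ρ →
          |(x 0 + y 0) ^ u * (x 1 + y 1) ^ v| ≤
            K * (‖x‖ ^ 4 / δ ^ 2 + min (‖y‖ ^ 2) (ρ ^ 2)) := by
  refine ⟨8, by norm_num, ?_⟩
  intro u v huv δ ρ hδ hδ1 hρ hρ1 x y h1 h2
  set z : EuclideanSpace ℝ (Fin 2) := x + y with hz
  have hx0 : x 0 + y 0 = z 0 := rfl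
  have hx1 : x 1 + y 1 = z 1 := rfl
  have hs : ‖z‖ ≤ ‖x‖ + ‖y‖ := norm_add_le x y
  have hzx : z - x = y := by rw [hz]; abel
  clear_value z
  have hz0 : |z 0| ≤ ‖z‖ := coord_abs_le_norm z 0
  have hz1 : |z 1| ≤ ‖z‖ := coord_abs_le_norm z 1
  have hzn : (0:ℝ) ≤ ‖z‖ := norm_nonneg _
  have hz_le1 : ‖z‖ ≤ 1 := by linarith
  -- LHS ≤ ‖z‖ ^ (u + v) ≤ ‖z‖ ^ 2
  have step1 : |(x 0 + y 0) ^ u * (x 1 + y 1) ^ v| ≤ ‖z‖ ^ (u + v) := by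
    rw [hx0, hx1, abs_mul, abs_pow, abs_pow, pow_add]
    exact mul_le_mul (pow_le_pow_left₀ (abs_nonneg _) hz0 u)
      (pow_le_pow_left₀ (abs_nonneg _) hz1 v) (by positivity) (by positivity)
  have step2 : ‖z‖ ^ (u + v) ≤ ‖z‖ ^ 2 :=
    pow_le_pow_of_le_one hzn hz_le1 huv
  -- Now bound ‖z‖ ^ 2
  have hyn : (0:ℝ) ≤ ‖y‖ := norm_nonneg _
  have hxn : (0:ℝ) ≤ ‖x‖ := norm_nonneg _
  have hd4 : (0:ℝ) ≤ ‖x‖ ^ 4 / δ ^ 2 := by positivity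
  have key : ‖z‖ ^ 2 ≤ 8 * (‖x‖ ^ 4 / δ ^ 2 + min (‖y‖ ^ 2) (ρ ^ 2)) := by
    have hss : ‖z‖ ^ 2 ≤ (‖x‖ + ‖y‖) ^ 2 := by nlinarith
    rcases le_or_gt (‖y‖ ^ 2) (ρ ^ 2) with hmin | hmin
    · rw [min_eq_left hmin]
      rcases le_or_gt (δ / 2) ‖x‖ with hxb | hxb
      · have hδsq : δ ^ 2 ≤ 4 * ‖x‖ ^ 2 := by nlinarith
        have h4 : ‖x‖ ^ 2 / 4 ≤ ‖x‖ ^ 4 / δ ^ 2 := by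
          rw [div_le_div_iff₀ (by norm_num) (by positivity)]
          nlinarith [mul_le_mul_of_nonneg_left hδsq (sq_nonneg ‖x‖)]
        nlinarith [sq_nonneg (‖x‖ - ‖y‖)]
      · have hyb : ‖z‖ - ‖x‖ ≤ ‖y‖ := by
          have h := norm_sub_norm_le z x
          rwa [hzx] at h
        have hb : (0:ℝ) ≤ ‖y‖ - ‖z‖ / 2 := by linarith
        nlinarith [sq_nonneg (‖z‖ - 2 * ‖y‖), mul_nonneg hzn hb]
    · rw [min_eq_right hmin.le]
      nlinarith [mul_le_mul h2 h2 hzn (by positivity : (0:ℝ) ≤ 2 * ρ)]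
  calc |(x 0 + y 0) ^ u * (x 1 + y 1) ^ v| ≤ ‖z‖ ^ (u + v) := step1
    _ ≤ ‖z‖ ^ 2 := step2
    _ ≤ 8 * (‖x‖ ^ 4 / δ ^ 2 + min (‖y‖ ^ 2) (ρ ^ 2)) := key
end

section
/- Let L > 0 and let ψ : [0, ∞) → [0, 1] be a nonincreasing L-Lipschitz function with ψ(r) = 1 for r ∈ [0, 1] and ψ(r) = 0 for r ≥ 2. Define f : ℝ² → ℝ by f(x) = (x₁·x₂)² and, for η > 0, set f_η(x) = f(x)·ψ(‖x‖/η). Then there exists a constant K > 0, depending only on L, such that for all η > 0 and all x, y ∈ ℝ²: |f_η(x + y) − f_η(x)| ≤ K·η³·min(‖y‖, η). -/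
private lemma e2_norm_sq (x : EuclideanSpace ℝ (Fin 2)) :
    ‖x‖ ^ 2 = x 0 ^ 2 + x 1 ^ 2 := by
  rw [EuclideanSpace.norm_eq, Real.sq_sqrt (by positivity)]
  simp [Fin.sum_univ_two, sq_abs]

private lemma e2_abs_comp_le (x : EuclideanSpace ℝ (Fin 2)) (i : Fin 2) :
    |x i| ≤ ‖x‖ := by
  have h := e2_norm_sq x
  have h0 : x 0 ^ 2 ≤ ‖x‖ ^ 2 := by nlinarith [sq_nonneg (x 1)]
  have h1 : x 1 ^ 2 ≤ ‖x‖ ^ 2 := by nlinarith [sq_nonneg (x 0)]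
  have key : x i ^ 2 ≤ ‖x‖ ^ 2 := by
    fin_cases i
    · exact h0
    · exact h1
  calc |x i| = Real.sqrt (x i ^ 2) := (Real.sqrt_sq_eq_abs _).symm
    _ ≤ Real.sqrt (‖x‖ ^ 2) := Real.sqrt_le_sqrt key
    _ = ‖x‖ := Real.sqrt_sq (norm_nonneg x)

private lemma e2_mul_le (x : EuclideanSpace ℝ (Fin 2)) :
    |x 0 * x 1| ≤ ‖x‖ ^ 2 / 2 := by
  have h := e2_norm_sq x
  rw [abs_mul]
  nlinarith [sq_nonneg (|x 0| - |x 1|), sq_abs (x 0), sq_abs (x 1)]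

private lemma g_bound (η : ℝ) (hη : 0 < η) (ψ : ℝ → ℝ)
    (hψ01 : ∀ r, 0 ≤ r → ψ r ∈ Set.Icc (0 : ℝ) 1)
    (hzero : ∀ r, 2 ≤ r → ψ r = 0) (x : EuclideanSpace ℝ (Fin 2)) :
    |(x 0 * x 1) ^ 2 * ψ (‖x‖ / η)| ≤ 4 * η ^ 4 := by
  by_cases h : 2 * η ≤ ‖x‖
  · rw [hzero _ (by rw [le_div_iff₀ hη]; linarith)]
    simp
    positivity
  · push_neg at h
    obtain ⟨hψ0, hψ1⟩ := hψ01 (‖x‖ / η) (by positivity)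
    have hm := e2_mul_le x
    have hn : ‖x‖ ^ 2 ≤ 4 * η ^ 2 := by nlinarith [norm_nonneg x]
    have hsq : (x 0 * x 1) ^ 2 ≤ 4 * η ^ 4 := by
      nlinarith [sq_abs (x 0 * x 1), abs_nonneg (x 0 * x 1)]
    rw [abs_mul, abs_of_nonneg (sq_nonneg (x 0 * x 1)), abs_of_nonneg hψ0]
    nlinarith [sq_nonneg (x 0 * x 1)]

private lemma prod_split (pa pb ψa ψb η d L : ℝ) (hη : 0 < η) (hd : 0 ≤ d)
    (hL : 0 ≤ L) (hψa0 : 0 ≤ ψa) (hψa1 : ψa ≤ 1)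
    (hdiff : |pa - pb| ≤ 6 * η * d) (hsum : |pa + pb| ≤ 9 * η ^ 2)
    (hpb : |pb| ≤ 9 * η ^ 2 / 2) (hlipd : |ψa - ψb| ≤ L * d / η) :
    |pa ^ 2 * ψa - pb ^ 2 * ψb| ≤ (54 + 81 * L / 4) * η ^ 3 * d := by
  have hsplit : |pa ^ 2 * ψa - pb ^ 2 * ψb|
      ≤ |pa ^ 2 - pb ^ 2| * ψa + pb ^ 2 * |ψa - ψb| := by
    have key : pa ^ 2 * ψa - pb ^ 2 * ψb
        = (pa ^ 2 - pb ^ 2) * ψa + pb ^ 2 * (ψa - ψb) := by ring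
    rw [key]
    calc |(pa ^ 2 - pb ^ 2) * ψa + pb ^ 2 * (ψa - ψb)|
        ≤ |(pa ^ 2 - pb ^ 2) * ψa| + |pb ^ 2 * (ψa - ψb)| := abs_add_le _ _
      _ = |pa ^ 2 - pb ^ 2| * ψa + pb ^ 2 * |ψa - ψb| := by
          rw [abs_mul, abs_mul, abs_of_nonneg hψa0, abs_of_nonneg (sq_nonneg pb)]
  have hsq : |pa ^ 2 - pb ^ 2| ≤ 54 * η ^ 3 * d := by
    have key : pa ^ 2 - pb ^ 2 = (pa - pb) * (pa + pb) := by ring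
    rw [key, abs_mul]
    calc |pa - pb| * |pa + pb| ≤ (6 * η * d) * (9 * η ^ 2) :=
          mul_le_mul hdiff hsum (abs_nonneg _) (by positivity)
      _ = 54 * η ^ 3 * d := by ring
  have hpb2 : pb ^ 2 ≤ 81 * η ^ 4 / 4 := by
    nlinarith [sq_abs pb, abs_nonneg pb, sq_nonneg η]
  have hterm1 : |pa ^ 2 - pb ^ 2| * ψa ≤ 54 * η ^ 3 * d := by
    calc |pa ^ 2 - pb ^ 2| * ψa ≤ |pa ^ 2 - pb ^ 2| * 1 :=
          mul_le_mul_of_nonneg_left hψa1 (abs_nonneg _)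
      _ = |pa ^ 2 - pb ^ 2| := mul_one _
      _ ≤ 54 * η ^ 3 * d := hsq
  have hterm2 : pb ^ 2 * |ψa - ψb| ≤ 81 * L / 4 * η ^ 3 * d := by
    calc pb ^ 2 * |ψa - ψb| ≤ (81 * η ^ 4 / 4) * (L * d / η) :=
          mul_le_mul hpb2 hlipd (abs_nonneg _) (by positivity)
      _ = 81 * L / 4 * η ^ 3 * d := by field_simp
  calc |pa ^ 2 * ψa - pb ^ 2 * ψb|
      ≤ |pa ^ 2 - pb ^ 2| * ψa + pb ^ 2 * |ψa - ψb| := hsplit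
    _ ≤ 54 * η ^ 3 * d + 81 * L / 4 * η ^ 3 * d := add_le_add hterm1 hterm2
    _ = (54 + 81 * L / 4) * η ^ 3 * d := by ring

set_option maxHeartbeats 1000000 in
private lemma aux_lip (L : ℝ) (hL : 0 < L) (ψ : ℝ → ℝ)
    (hψ01 : ∀ r, 0 ≤ r → ψ r ∈ Set.Icc (0 : ℝ) 1)
    (hlip : ∀ r s, 0 ≤ r → 0 ≤ s → |ψ r - ψ s| ≤ L * |r - s|)
    (hzero : ∀ r, 2 ≤ r → ψ r = 0)
    (η : ℝ) (hη : 0 < η) (a b : EuclideanSpace ℝ (Fin 2)) (hab : ‖a‖ ≤ ‖b‖) :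
    |(a 0 * a 1) ^ 2 * ψ (‖a‖ / η) - (b 0 * b 1) ^ 2 * ψ (‖b‖ / η)|
      ≤ (54 + 81 * L / 4) * η ^ 3 * ‖a - b‖ := by
  have hd : (0 : ℝ) ≤ ‖a - b‖ := norm_nonneg _
  have hdn : ‖b‖ - ‖a‖ ≤ ‖a - b‖ := by
    have := norm_sub_norm_le b a
    rw [norm_sub_rev] at this
    linarith
  by_cases h2 : 2 * η ≤ ‖a‖
  · rw [hzero _ (by rw [le_div_iff₀ hη]; linarith),
      hzero _ (by rw [le_div_iff₀ hη]; linarith)]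
    simp
    positivity
  · push_neg at h2
    by_cases h3 : 3 * η ≤ ‖b‖
    · have hdη : η ≤ ‖a - b‖ := by linarith
      rw [hzero (‖b‖ / η) (by rw [le_div_iff₀ hη]; linarith), mul_zero, sub_zero]
      have hg := g_bound η hη ψ hψ01 hzero a
      have h4 : (4 : ℝ) * η ^ 4 ≤ 4 * η ^ 3 * ‖a - b‖ := by
        have := mul_le_mul_of_nonneg_left hdη (le_of_lt (pow_pos hη 3))
        nlinarith
      have h5 : (4 : ℝ) * η ^ 3 * ‖a - b‖ ≤ (54 + 81 * L / 4) * η ^ 3 * ‖a - b‖ := by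
        have hx : (0 : ℝ) ≤ L * η ^ 3 * ‖a - b‖ := by positivity
        have hy : (0 : ℝ) ≤ η ^ 3 * ‖a - b‖ := by positivity
        nlinarith
      linarith
    · push_neg at h3
      obtain ⟨hψa0, hψa1⟩ := hψ01 (‖a‖ / η) (by positivity)
      have hlipd : |ψ (‖a‖ / η) - ψ (‖b‖ / η)| ≤ L * ‖a - b‖ / η := by
        have h1 := hlip (‖a‖ / η) (‖b‖ / η) (by positivity) (by positivity)
        have h2' : |‖a‖ / η - ‖b‖ / η| = |‖a‖ - ‖b‖| / η := by
          rw [div_sub_div_same, abs_div, abs_of_pos hη]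
        have h3' : |‖a‖ - ‖b‖| ≤ ‖a - b‖ := abs_norm_sub_norm_le a b
        rw [h2'] at h1
        calc |ψ (‖a‖ / η) - ψ (‖b‖ / η)| ≤ L * (|‖a‖ - ‖b‖| / η) := h1
          _ ≤ L * (‖a - b‖ / η) := by gcongr
          _ = L * ‖a - b‖ / η := by ring
      have ha1 : |a 1| ≤ ‖a‖ := e2_abs_comp_le a 1
      have hb0 : |b 0| ≤ ‖b‖ := e2_abs_comp_le b 0
      have hd0 : |a 0 - b 0| ≤ ‖a - b‖ := by
        have := e2_abs_comp_le (a - b) 0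
        simpa using this
      have hd1 : |a 1 - b 1| ≤ ‖a - b‖ := by
        have := e2_abs_comp_le (a - b) 1
        simpa using this
      have hdiff : |a 0 * a 1 - b 0 * b 1| ≤ 6 * η * ‖a - b‖ := by
        have key : a 0 * a 1 - b 0 * b 1
            = a 1 * (a 0 - b 0) + b 0 * (a 1 - b 1) := by ring
        rw [key]
        calc |a 1 * (a 0 - b 0) + b 0 * (a 1 - b 1)|
            ≤ |a 1 * (a 0 - b 0)| + |b 0 * (a 1 - b 1)| := abs_add_le _ _
          _ = |a 1| * |a 0 - b 0| + |b 0| * |a 1 - b 1| := by rw [abs_mul, abs_mul]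
          _ ≤ 6 * η * ‖a - b‖ := by
              nlinarith [abs_nonneg (a 1), abs_nonneg (b 0), abs_nonneg (a 0 - b 0),
                abs_nonneg (a 1 - b 1), norm_nonneg a]
      have hsum : |a 0 * a 1 + b 0 * b 1| ≤ 9 * η ^ 2 := by
        have hma := e2_mul_le a
        have hmb := e2_mul_le b
        have habs := abs_add_le (a 0 * a 1) (b 0 * b 1)
        have hna : ‖a‖ ^ 2 ≤ 9 * η ^ 2 := by nlinarith [norm_nonneg a]
        have hnb : ‖b‖ ^ 2 ≤ 9 * η ^ 2 := by nlinarith [norm_nonneg b]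
        nlinarith
      have hpb : |b 0 * b 1| ≤ 9 * η ^ 2 / 2 := by
        have hmb := e2_mul_le b
        have hnb : ‖b‖ ^ 2 ≤ 9 * η ^ 2 := by nlinarith [norm_nonneg b]
        linarith
      exact prod_split (a 0 * a 1) (b 0 * b 1) (ψ (‖a‖ / η)) (ψ (‖b‖ / η)) η ‖a - b‖ L
        hη hd hL.le hψa0 hψa1 hdiff hsum hpb hlipd

/-- Let `L > 0` and let `ψ : [0,∞) → [0,1]` be nonincreasing, `L`-Lipschitz, with `ψ = 1` on
`[0,1]` and `ψ = 0` on `[2,∞)`. With `f(x) = (x₁·x₂)²` and `f_η(x) = f(x)·ψ(‖x‖/η)`, there is a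
constant `K > 0` depending only on `L` with
`|f_η(x+y) − f_η(x)| ≤ K·η³·min(‖y‖, η)` for all `η > 0` and `x, y ∈ ℝ²`. -/
theorem truncated_f_lipschitz_bound (L : ℝ) (hL : 0 < L) (ψ : ℝ → ℝ)
    (hψ01 : ∀ r, 0 ≤ r → ψ r ∈ Set.Icc (0 : ℝ) 1)
    (hanti : ∀ r s, 0 ≤ r → r ≤ s → ψ s ≤ ψ r)
    (hlip : ∀ r s, 0 ≤ r → 0 ≤ s → |ψ r - ψ s| ≤ L * |r - s|)
    (hone : ∀ r, 0 ≤ r → r ≤ 1 → ψ r = 1)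
    (hzero : ∀ r, 2 ≤ r → ψ r = 0) :
    ∃ K : ℝ, 0 < K ∧ ∀ (η : ℝ), 0 < η → ∀ x y : EuclideanSpace ℝ (Fin 2),
      |((x 0 + y 0) * (x 1 + y 1)) ^ 2 * ψ (‖x + y‖ / η) -
          (x 0 * x 1) ^ 2 * ψ (‖x‖ / η)| ≤ K * η ^ 3 * min ‖y‖ η := by
  refine ⟨62 + 21 * L, by linarith, ?_⟩
  intro η hη x y
  have hcomp0 : (x + y) 0 = x 0 + y 0 := rfl
  have hcomp1 : (x + y) 1 = x 1 + y 1 := rfl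
  have hab : x + y - x = y := by abel
  have hdy : ‖x + y - x‖ = ‖y‖ := by rw [hab]
  rw [← hcomp0, ← hcomp1]
  have hlip1 : |((x + y) 0 * (x + y) 1) ^ 2 * ψ (‖x + y‖ / η) -
      (x 0 * x 1) ^ 2 * ψ (‖x‖ / η)| ≤ (54 + 81 * L / 4) * η ^ 3 * ‖y‖ := by
    rcases le_total ‖x + y‖ ‖x‖ with h | h
    · have := aux_lip L hL ψ hψ01 hlip hzero η hη (x + y) x h
      rwa [hdy] at this
    · have := aux_lip L hL ψ hψ01 hlip hzero η hη x (x + y) h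
      rw [abs_sub_comm]
      rwa [norm_sub_rev, hdy] at this
  have hcrude : |((x + y) 0 * (x + y) 1) ^ 2 * ψ (‖x + y‖ / η) -
      (x 0 * x 1) ^ 2 * ψ (‖x‖ / η)| ≤ 8 * η ^ 4 := by
    have h1 := g_bound η hη ψ hψ01 hzero (x + y)
    have h2 := g_bound η hη ψ hψ01 hzero x
    calc |((x + y) 0 * (x + y) 1) ^ 2 * ψ (‖x + y‖ / η) -
            (x 0 * x 1) ^ 2 * ψ (‖x‖ / η)|
        ≤ |((x + y) 0 * (x + y) 1) ^ 2 * ψ (‖x + y‖ / η)| +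
            |(x 0 * x 1) ^ 2 * ψ (‖x‖ / η)| := abs_sub _ _
      _ ≤ 8 * η ^ 4 := by linarith
  rcases le_total ‖y‖ η with hm | hm
  · rw [min_eq_left hm]
    have hx : (0 : ℝ) ≤ L * η ^ 3 * ‖y‖ := by positivity
    have hy : (0 : ℝ) ≤ η ^ 3 * ‖y‖ := by positivity
    have : (54 + 81 * L / 4) * η ^ 3 * ‖y‖ ≤ (62 + 21 * L) * η ^ 3 * ‖y‖ := by nlinarith
    linarith
  · rw [min_eq_right hm]
    have hx : (0 : ℝ) < L * η ^ 4 := by positivity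
    have : (8 : ℝ) * η ^ 4 ≤ (62 + 21 * L) * η ^ 3 * η := by nlinarith [pow_pos hη 4]
    linarith
end

section
/- Let h : ℝ² → ℝ be a continuous function with compact support such that h(x) = o(‖x‖²) as x → 0. Then there exists a continuous function θ : ℝ → [0, ∞) with θ(y) = o(y²) as y → 0 such that |h(x)| ≤ θ(x₁) + θ(x₂) for all x = (x₁, x₂) ∈ ℝ². -/
open Asymptotics Topology

lemma clamp_bounds (t b d : ℝ) (hb : 0 ≤ b) (hd : 0 ≤ d) (ht : |t| ≤ b + d) :
    |max (-b) (min t b)| ≤ b ∧ |t - max (-b) (min t b)| ≤ d := by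
  rw [abs_le] at ht ⊢
  rw [abs_le]
  rcases le_total t b with h1 | h1 <;> rcases le_total (-b) t with h2 | h2 <;>
    simp [min_eq_left, min_eq_right, max_eq_left, max_eq_right, *] <;>
    constructor <;> linarith

/-- Let `h : ℝ² → ℝ` be continuous with compact support and `h(x) = o(‖x‖²)` as `x → 0`. Then
there is a continuous nonnegative `θ : ℝ → ℝ` with `θ(y) = o(y²)` as `y → 0` dominating `|h|`:
`|h(x)| ≤ θ(x₁) + θ(x₂)` for all `x ∈ ℝ²`. -/
theorem domination_by_one_dimensional (h : EuclideanSpace ℝ (Fin 2) → ℝ)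
    (hc : Continuous h) (hsupp : HasCompactSupport h)
    (ho : h =o[𝓝 (0 : EuclideanSpace ℝ (Fin 2))] fun x => ‖x‖ ^ 2) :
    ∃ θ : ℝ → ℝ, Continuous θ ∧ (∀ y, 0 ≤ θ y) ∧
      (θ =o[𝓝 (0 : ℝ)] fun y : ℝ => y ^ 2) ∧
      ∀ x : EuclideanSpace ℝ (Fin 2), |h x| ≤ θ (x 0) + θ (x 1) := by
  classical
  set K : ℝ → Set (EuclideanSpace ℝ (Fin 2)) :=
    fun y => {x | |x 0| ≤ |y| ∧ |x 1| ≤ |y|} with hKdef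
  set θ : ℝ → ℝ := fun y => sSup ((fun x => |h x|) '' K y) with hθdef
  -- norm in terms of coordinates
  have hnorm : ∀ x : EuclideanSpace ℝ (Fin 2),
      ‖x‖ = Real.sqrt ((x 0) ^ 2 + (x 1) ^ 2) := by
    intro x
    rw [EuclideanSpace.norm_eq]
    simp [Fin.sum_univ_two, Real.norm_eq_abs, sq_abs]
  have hnormsq : ∀ x : EuclideanSpace ℝ (Fin 2), ‖x‖ ^ 2 = (x 0) ^ 2 + (x 1) ^ 2 := by
    intro x
    rw [hnorm x]
    exact Real.sq_sqrt (by positivity)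
  -- K y is compact
  have hKclosed : ∀ y, IsClosed (K y) := by
    intro y
    have h0 : Continuous fun x : EuclideanSpace ℝ (Fin 2) => |x 0| :=
      ((EuclideanSpace.proj (0 : Fin 2)).continuous).abs
    have h1 : Continuous fun x : EuclideanSpace ℝ (Fin 2) => |x 1| :=
      ((EuclideanSpace.proj (1 : Fin 2)).continuous).abs
    exact (isClosed_le h0 continuous_const).inter (isClosed_le h1 continuous_const)
  have hKcompact : ∀ y, IsCompact (K y) := by
    intro y
    refine IsCompact.of_isClosed_subset
      (isCompact_closedBall (0 : EuclideanSpace ℝ (Fin 2)) (2 * |y|)) (hKclosed y) ?_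
    intro x hx
    rw [Metric.mem_closedBall, dist_zero_right, hnorm x]
    have h0 := hx.1; have h1 := hx.2
    have : (x 0) ^ 2 + (x 1) ^ 2 ≤ (2 * |y|) ^ 2 := by
      have e0 : (x 0) ^ 2 ≤ |y| ^ 2 := by
        rw [← sq_abs (x 0)]; exact pow_le_pow_left₀ (abs_nonneg _) h0 2
      have e1 : (x 1) ^ 2 ≤ |y| ^ 2 := by
        rw [← sq_abs (x 1)]; exact pow_le_pow_left₀ (abs_nonneg _) h1 2
      nlinarith [abs_nonneg y]
    calc Real.sqrt ((x 0) ^ 2 + (x 1) ^ 2) ≤ Real.sqrt ((2 * |y|) ^ 2) :=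
          Real.sqrt_le_sqrt this
      _ = 2 * |y| := Real.sqrt_sq (by positivity)
  have h0mem : ∀ y, (0 : EuclideanSpace ℝ (Fin 2)) ∈ K y := by
    intro y
    constructor <;> simp
  have hne : ∀ y, ((fun x => |h x|) '' K y).Nonempty :=
    fun y => ⟨|h 0|, 0, h0mem y, rfl⟩
  have hbdd : ∀ y, BddAbove ((fun x => |h x|) '' K y) :=
    fun y => ((hKcompact y).image hc.abs).bddAbove
  have hle : ∀ y, ∀ x ∈ K y, |h x| ≤ θ y :=
    fun y x hx => le_csSup (hbdd y) ⟨x, hx, rfl⟩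
  have hθ0 : ∀ y, 0 ≤ θ y := fun y => le_trans (abs_nonneg _) (hle y 0 (h0mem y))
  -- key uniform-continuity estimate
  have huc : UniformContinuous h := hsupp.uniformContinuous_of_continuous hc
  have hkey : ∀ ε : ℝ, 0 < ε → ∃ d : ℝ, 0 < d ∧
      ∀ y y' : ℝ, |y'| ≤ |y| + d → θ y' ≤ θ y + ε := by
    intro ε hε
    obtain ⟨δ, hδ, hδ'⟩ := Metric.uniformContinuous_iff.mp huc ε hε
    refine ⟨δ / 3, by linarith, ?_⟩
    intro y y' hyy'
    refine csSup_le (hne y') ?_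
    rintro z ⟨x, hx, rfl⟩
    set d : ℝ := δ / 3
    have hd : 0 < d := by positivity
    set x' : EuclideanSpace ℝ (Fin 2) := WithLp.toLp 2 (fun i => max (-|y|) (min (x i) |y|)) with hx'def
    have hc0 := clamp_bounds (x 0) |y| d (abs_nonneg y) hd.le
      (le_trans hx.1 hyy')
    have hc1 := clamp_bounds (x 1) |y| d (abs_nonneg y) hd.le
      (le_trans hx.2 hyy')
    have hx'mem : x' ∈ K y := ⟨hc0.1, hc1.1⟩
    have hdist : dist x x' < δ := by
      have : dist x x' = Real.sqrt (((x - x') 0) ^ 2 + ((x - x') 1) ^ 2) := by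
        rw [dist_eq_norm, hnorm]
      rw [this]
      have e0 : ((x - x') 0) ^ 2 ≤ d ^ 2 := by
        have : (x - x') 0 = x 0 - x' 0 := rfl
        rw [this, ← sq_abs]
        exact pow_le_pow_left₀ (abs_nonneg _) hc0.2 2
      have e1 : ((x - x') 1) ^ 2 ≤ d ^ 2 := by
        have : (x - x') 1 = x 1 - x' 1 := rfl
        rw [this, ← sq_abs]
        exact pow_le_pow_left₀ (abs_nonneg _) hc1.2 2
      have : Real.sqrt (((x - x') 0) ^ 2 + ((x - x') 1) ^ 2) ≤ Real.sqrt ((2 * d) ^ 2) := by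
        apply Real.sqrt_le_sqrt; nlinarith
      calc Real.sqrt (((x - x') 0) ^ 2 + ((x - x') 1) ^ 2) ≤ Real.sqrt ((2 * d) ^ 2) := this
        _ = 2 * d := Real.sqrt_sq (by positivity)
        _ < δ := by simp only [d]; linarith
    have := hδ' hdist
    rw [Real.dist_eq] at this
    have habs : |h x| ≤ |h x'| + ε := by
      have := abs_sub_abs_le_abs_sub (h x) (h x')
      linarith
    exact le_trans habs (by linarith [hle y x' hx'mem])
  -- continuity
  have hcont : Continuous θ := by
    rw [Metric.continuous_iff]
    intro b ε hε
    obtain ⟨d, hd, hkey'⟩ := hkey (ε / 2) (by linarith)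
    refine ⟨d, hd, ?_⟩
    intro a hab
    rw [Real.dist_eq] at hab ⊢
    have h1 : |a| ≤ |b| + d := by
      have := abs_sub_abs_le_abs_sub a b
      linarith [le_of_lt (lt_of_le_of_lt this hab)]
    have h2 : |b| ≤ |a| + d := by
      have := abs_sub_abs_le_abs_sub b a
      rw [abs_sub_comm b a] at this
      linarith [le_of_lt (lt_of_le_of_lt this hab)]
    have e1 := hkey' b a h1
    have e2 := hkey' a b h2
    rw [abs_lt]; constructor <;> linarith
  -- littleO
  have hlo : θ =o[𝓝 (0 : ℝ)] fun y : ℝ => y ^ 2 := by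
    rw [isLittleO_iff]
    intro ε hε
    have := (isLittleO_iff.mp ho) (c := ε / 2) (by linarith)
    rw [Metric.eventually_nhds_iff] at this
    obtain ⟨δ, hδ, hδ'⟩ := this
    rw [Metric.eventually_nhds_iff]
    refine ⟨δ / 2, by linarith, ?_⟩
    intro y hy
    rw [Real.dist_eq, sub_zero] at hy
    have hθy : θ y ≤ ε * y ^ 2 := by
      refine csSup_le (hne y) ?_
      rintro z ⟨x, hx, rfl⟩
      have hxn : ‖x‖ ^ 2 ≤ 2 * y ^ 2 := by
        rw [hnormsq]
        have e0 : (x 0) ^ 2 ≤ y ^ 2 := by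
          rw [← sq_abs (x 0), ← sq_abs y]
          exact pow_le_pow_left₀ (abs_nonneg _) hx.1 2
        have e1 : (x 1) ^ 2 ≤ y ^ 2 := by
          rw [← sq_abs (x 1), ← sq_abs y]
          exact pow_le_pow_left₀ (abs_nonneg _) hx.2 2
        linarith
      have hxδ : dist x 0 < δ := by
        rw [dist_zero_right]
        nlinarith [norm_nonneg x, sq_abs y, abs_nonneg y, sq_nonneg (‖x‖ - δ),
          sq_nonneg (‖x‖ + δ)]
      have := hδ' hxδ
      rw [Real.norm_eq_abs, Real.norm_eq_abs, abs_pow, sq_abs] at this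
      nlinarith
    simpa [Real.norm_eq_abs, abs_pow, sq_abs, abs_of_nonneg (hθ0 y)] using hθy
  refine ⟨θ, hcont, hθ0, hlo, ?_⟩
  intro x
  rcases le_total |x 0| |x 1| with hcmp | hcmp
  · have : x ∈ K (x 1) := ⟨le_trans hcmp le_rfl, le_rfl⟩
    have := hle (x 1) x this
    linarith [hθ0 (x 0)]
  · have : x ∈ K (x 0) := ⟨le_rfl, hcmp⟩
    have := hle (x 0) x this
    linarith [hθ0 (x 1)]
end

section
/- Let (Y_i)_{i≥1} be i.i.d. positive real random variables whose common distribution is atomless, and let Z : (0, 1) → ℝ satisfy P(Y₁ > Z(x)) = x for every x ∈ (0, 1). Fix α ∈ (0, 1), an integer N with N > 4/(α(1−α)), and ε ∈ (4/N, α(1−α)). Let V be the ⌊αN⌋-th largest value among Y₁, …, Y_N (almost surely well-defined since the Y_i are almost surely pairwise distinct). Then P( V ∉ [Z(α+ε), Z(α−ε)] ) ≤ 5/(4·N·ε²). -/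
open MeasureTheory ProbabilityTheory

lemma chebyshev_count {Ω : Type*} [MeasurableSpace Ω]
    (P : Measure Ω) [IsProbabilityMeasure P]
    (Y : ℕ → Ω → ℝ) (hmeas : ∀ i, Measurable (Y i))
    (hindep : iIndepFun Y P)
    (hident : ∀ i, IdentDistrib (Y i) (Y 0) P P)
    (t x : ℝ) (hx0 : 0 ≤ x) (hx1 : x ≤ 1)
    (hP : P {ω | t < Y 0 ω} = ENNReal.ofReal x)
    (N : ℕ) (c : ℝ) (hc : 0 < c) :
    P {ω | c ≤ |(∑ i ∈ Finset.range N, (if t < Y i ω then (1:ℝ) else 0)) - N * x|}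
      ≤ ENNReal.ofReal ((N : ℝ) * (x * (1 - x)) / c ^ 2) := by
  classical
  set g : ℝ → ℝ := (Set.Ioi t).indicator (fun _ => (1:ℝ)) with hg
  have hgmeas : Measurable g := measurable_const.indicator measurableSet_Ioi
  set f : ℕ → Ω → ℝ := fun i => g ∘ Y i with hf
  have hfeq : ∀ i ω, f i ω = if t < Y i ω then (1:ℝ) else 0 := by
    intro i ω
    simp [hf, hg, Set.indicator_apply, Set.mem_Ioi]
  have hfmeas : ∀ i, Measurable (f i) := fun i => hgmeas.comp (hmeas i)
  have hfmem : ∀ i, MemLp (f i) 2 P := by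
    intro i
    refine MemLp.of_bound (hfmeas i).aestronglyMeasurable 1 (ae_of_all _ fun ω => ?_)
    rw [hfeq]
    split_ifs <;> simp
  have hmeasval : ∀ i, P {ω | t < Y i ω} = ENNReal.ofReal x := by
    intro i
    have h1 : {ω | t < Y i ω} = Y i ⁻¹' Set.Ioi t := rfl
    have h2 : {ω | t < Y 0 ω} = Y 0 ⁻¹' Set.Ioi t := rfl
    rw [h1, ← Measure.map_apply (hmeas i) measurableSet_Ioi, (hident i).map_eq,
      Measure.map_apply (hmeas 0) measurableSet_Ioi, ← h2, hP]
  have hint : ∀ i, ∫ ω, f i ω ∂P = x := by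
    intro i
    have heq : f i = Set.indicator (Y i ⁻¹' Set.Ioi t) (fun _ => (1:ℝ)) := by
      funext ω
      rw [hfeq, Set.indicator_apply]
      rfl
    rw [heq, integral_indicator_const (1:ℝ) ((hmeas i) measurableSet_Ioi)]
    have : (Y i ⁻¹' Set.Ioi t) = {ω | t < Y i ω} := rfl
    rw [this, measureReal_def, hmeasval i]
    simp [ENNReal.toReal_ofReal hx0]
  have hsq : ∀ i, (f i) ^ 2 = f i := by
    intro i
    funext ω
    simp only [Pi.pow_apply]
    rw [hfeq]
    split_ifs <;> norm_num
  have hvar : ∀ i, variance (f i) P = x * (1 - x) := by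
    intro i
    rw [variance_eq_sub (hfmem i), hsq i, hint i]
    ring
  set S : Ω → ℝ := ∑ i ∈ Finset.range N, f i with hS
  have hSmem : MemLp S 2 P := memLp_finset_sum' _ (fun i _ => hfmem i)
  have hSapp : ∀ ω, S ω = ∑ i ∈ Finset.range N, (if t < Y i ω then (1:ℝ) else 0) := by
    intro ω
    rw [hS, Finset.sum_apply]
    exact Finset.sum_congr rfl fun i _ => hfeq i ω
  have hSmean : ∫ ω, S ω ∂P = N * x := by
    have : ∫ ω, S ω ∂P = ∑ i ∈ Finset.range N, ∫ ω, f i ω ∂P := by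
      rw [hS]
      have := integral_finset_sum (μ := P) (Finset.range N)
        (fun i _ => (hfmem i).integrable one_le_two)
      simpa using this
    rw [this]
    simp [hint]
  have hindepf : Set.Pairwise ↑(Finset.range N) fun i j => IndepFun (f i) (f j) P := by
    intro i _ j _ hij
    exact (hindep.indepFun hij).comp hgmeas hgmeas
  have hSvar : variance S P = N * (x * (1 - x)) := by
    rw [hS, IndepFun.variance_sum (fun i _ => hfmem i) hindepf]
    simp [hvar, mul_comm]
  have hcheb := meas_ge_le_variance_div_sq (μ := P) hSmem hc
  rw [hSvar] at hcheb
  refine le_trans (le_of_eq ?_) hcheb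
  congr 1
  ext ω
  simp only [Set.mem_setOf_eq, hSapp ω, hSmean]

set_option maxHeartbeats 1600000 in
/-- Let `(Y_i)` be i.i.d. positive real random variables with atomless common law, and let
`Z : (0,1) → ℝ` satisfy `P(Y₀ > Z(x)) = x`. Fix `α ∈ (0,1)`, `N > 4/(α(1−α))` and
`ε ∈ (4/N, α(1−α))`. If `V` is the `⌊αN⌋`-th largest value among `Y₀, …, Y_{N−1}` (i.e. a.s.
`V` equals some `Y_i`, `i < N`, and exactly `⌊αN⌋ − 1` of the `Y_i`, `i < N`, exceed `V`), then
`P(V ∉ [Z(α+ε), Z(α−ε)]) ≤ 5/(4·N·ε²)`. -/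
theorem empirical_quantile_concentration {Ω : Type*} [MeasurableSpace Ω]
    (P : Measure Ω) [IsProbabilityMeasure P]
    (Y : ℕ → Ω → ℝ) (hmeas : ∀ i, Measurable (Y i))
    (hindep : iIndepFun Y P)
    (hident : ∀ i, IdentDistrib (Y i) (Y 0) P P)
    (hpos : ∀ i ω, 0 < Y i ω)
    (hatomless : ∀ a : ℝ, P {ω | Y 0 ω = a} = 0)
    (Z : ℝ → ℝ) (hZ : ∀ x ∈ Set.Ioo (0 : ℝ) 1, P {ω | Z x < Y 0 ω} = ENNReal.ofReal x)
    (α : ℝ) (hα : α ∈ Set.Ioo (0 : ℝ) 1)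
    (N : ℕ) (hN : 4 / (α * (1 - α)) < (N : ℝ))
    (ε : ℝ) (hε1 : 4 / (N : ℝ) < ε) (hε2 : ε < α * (1 - α))
    (V : Ω → ℝ)
    (hV : ∀ᵐ ω ∂P, (∃ i < N, V ω = Y i ω) ∧
      ((Finset.range N).filter fun i => V ω < Y i ω).card = ⌊α * N⌋₊ - 1) :
    P {ω | V ω ∉ Set.Icc (Z (α + ε)) (Z (α - ε))} ≤
      ENNReal.ofReal (5 / (4 * N * ε ^ 2)) := by
  classical
  obtain ⟨hα0, hα1⟩ := hα
  have hαα : 0 < α * (1 - α) := mul_pos hα0 (by linarith)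
  have hNpos : (0 : ℝ) < N := lt_trans (div_pos (by norm_num) hαα) hN
  have hεpos : 0 < ε := lt_trans (div_pos (by norm_num) hNpos) hε1
  have hNε : 4 < N * ε := by
    rw [div_lt_iff₀ hNpos] at hε1
    linarith [hε1]
  -- quantile levels
  have hp1 : α - ε ∈ Set.Ioo (0:ℝ) 1 := by
    constructor
    · nlinarith
    · linarith
  have hp2 : α + ε ∈ Set.Ioo (0:ℝ) 1 := by
    constructor
    · linarith
    · nlinarith
  set m := ⌊α * N⌋₊ with hm
  have hαN4 : (4:ℝ) < α * N := by
    have : 4 / (1 - α) < α * N := by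
      rw [div_lt_iff₀ (by linarith : (0:ℝ) < 1 - α)]
      rw [div_lt_iff₀ hαα] at hN
      nlinarith
    have h4 : (4:ℝ) ≤ 4 / (1 - α) := by
      rw [le_div_iff₀ (by linarith : (0:ℝ) < 1 - α)]
      nlinarith
    linarith
  have hm1 : 1 ≤ m := Nat.le_floor (by push_cast; nlinarith)
  have hmle : (m : ℝ) ≤ α * N := Nat.floor_le (by positivity)
  have hmgt : α * N - 1 < (m : ℝ) := Nat.sub_one_lt_floor _
  -- the two counting functions
  set S₁ : Ω → ℝ := fun ω => ∑ i ∈ Finset.range N, (if Z (α - ε) < Y i ω then (1:ℝ) else 0)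
    with hS₁
  set S₂ : Ω → ℝ := fun ω => ∑ i ∈ Finset.range N, (if Z (α + ε) < Y i ω then (1:ℝ) else 0)
    with hS₂
  set c₁ : ℝ := N * ε - 1 with hc₁
  set c₂ : ℝ := N * ε with hc₂
  have hc₁pos : 0 < c₁ := by rw [hc₁]; linarith
  have hc₂pos : 0 < c₂ := by rw [hc₂]; linarith
  set A₁ : Set Ω := {ω | c₁ ≤ |S₁ ω - N * (α - ε)|} with hA₁
  set A₂ : Set Ω := {ω | c₂ ≤ |S₂ ω - N * (α + ε)|} with hA₂
  -- counts equal cardinalities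
  have hcount : ∀ (t : ℝ) ω, (∑ i ∈ Finset.range N, (if t < Y i ω then (1:ℝ) else 0))
      = ((Finset.range N).filter fun i => t < Y i ω).card := by
    intro t ω
    rw [Finset.sum_boole]
  -- a.s. inclusion
  have hincl : {ω | V ω ∉ Set.Icc (Z (α + ε)) (Z (α - ε))} ≤ᵐ[P] (A₁ ∪ A₂ : Set Ω) := by
    filter_upwards [hV] with ω hω hbad
    obtain ⟨⟨i₀, hi₀N, hi₀⟩, hcard⟩ := hω
    have hbad' : V ω < Z (α + ε) ∨ Z (α - ε) < V ω := by
      have : ¬ (Z (α + ε) ≤ V ω ∧ V ω ≤ Z (α - ε)) := by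
        exact hbad
      rw [not_and_or, not_le, not_le] at this
      exact this
    show ω ∈ A₁ ∪ A₂
    rw [Set.mem_union]
    rcases hbad' with hlt | hgt
    · -- V ω < Z (α + ε) : S₂ ω ≤ m - 1
      right
      have hsub : ((Finset.range N).filter fun i => Z (α + ε) < Y i ω)
          ⊆ ((Finset.range N).filter fun i => V ω < Y i ω) := by
        intro i hi
        simp only [Finset.mem_filter] at hi ⊢
        exact ⟨hi.1, lt_trans hlt hi.2⟩
      have hle : S₂ ω ≤ (m - 1 : ℕ) := by
        show (∑ i ∈ Finset.range N, (if Z (α + ε) < Y i ω then (1:ℝ) else 0)) ≤ (m - 1 : ℕ)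
        rw [hcount]
        have := Finset.card_le_card hsub
        rw [hcard] at this
        exact_mod_cast this
      have hcast : ((m - 1 : ℕ) : ℝ) = (m : ℝ) - 1 := by
        rw [Nat.cast_sub hm1]; norm_num
      have : S₂ ω ≤ α * N - 1 := by
        rw [hcast] at hle
        linarith
      simp only [hA₂, Set.mem_setOf_eq]
      rw [abs_sub_comm, abs_of_nonneg (by nlinarith)]
      nlinarith
    · -- Z (α - ε) < V ω : S₁ ω ≥ m
      left
      have hsub : insert i₀ ((Finset.range N).filter fun i => V ω < Y i ω)
          ⊆ ((Finset.range N).filter fun i => Z (α - ε) < Y i ω) := by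
        intro i hi
        rcases Finset.mem_insert.1 hi with rfl | hi
        · simp only [Finset.mem_filter, Finset.mem_range]
          exact ⟨hi₀N, by rw [← hi₀]; exact hgt⟩
        · simp only [Finset.mem_filter, Finset.mem_range] at hi ⊢
          exact ⟨hi.1, lt_trans hgt hi.2⟩
      have hnotmem : i₀ ∉ ((Finset.range N).filter fun i => V ω < Y i ω) := by
        simp only [Finset.mem_filter, Finset.mem_range, not_and]
        intro _
        rw [← hi₀]
        exact lt_irrefl _
      have hcardins : (insert i₀ ((Finset.range N).filter fun i => V ω < Y i ω)).card = m := by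
        rw [Finset.card_insert_of_notMem hnotmem, hcard]
        omega
      have hge : (m : ℝ) ≤ S₁ ω := by
        show (m : ℝ) ≤ ∑ i ∈ Finset.range N, (if Z (α - ε) < Y i ω then (1:ℝ) else 0)
        rw [hcount]
        have := Finset.card_le_card hsub
        rw [hcardins] at this
        exact_mod_cast this
      simp only [hA₁, Set.mem_setOf_eq]
      rw [abs_of_nonneg (by nlinarith)]
      nlinarith
  have hb1 := chebyshev_count P Y hmeas hindep hident (Z (α - ε)) (α - ε)
    (le_of_lt hp1.1) (le_of_lt hp1.2) (hZ _ hp1) N c₁ hc₁pos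
  have hb2 := chebyshev_count P Y hmeas hindep hident (Z (α + ε)) (α + ε)
    (le_of_lt hp2.1) (le_of_lt hp2.2) (hZ _ hp2) N c₂ hc₂pos
  have hstep : P {ω | V ω ∉ Set.Icc (Z (α + ε)) (Z (α - ε))} ≤ P A₁ + P A₂ :=
    le_trans (measure_mono_ae hincl) (measure_union_le _ _)
  have hA₁b : P A₁ ≤ ENNReal.ofReal ((N : ℝ) * ((α - ε) * (1 - (α - ε))) / c₁ ^ 2) := hb1
  have hA₂b : P A₂ ≤ ENNReal.ofReal ((N : ℝ) * ((α + ε) * (1 - (α + ε))) / c₂ ^ 2) := hb2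
  refine le_trans hstep (le_trans (add_le_add hA₁b hA₂b) ?_)
  have hnn1 : 0 ≤ (N : ℝ) * ((α - ε) * (1 - (α - ε))) / c₁ ^ 2 := by
    apply div_nonneg _ (sq_nonneg _)
    have := hp1.1; have := hp1.2
    apply mul_nonneg (le_of_lt hNpos)
    nlinarith
  have hnn2 : 0 ≤ (N : ℝ) * ((α + ε) * (1 - (α + ε))) / c₂ ^ 2 := by
    apply div_nonneg _ (sq_nonneg _)
    have := hp2.1; have := hp2.2
    apply mul_nonneg (le_of_lt hNpos)
    nlinarith
  rw [← ENNReal.ofReal_add hnn1 hnn2]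
  apply ENNReal.ofReal_le_ofReal
  -- final arithmetic
  have hq1 : (α - ε) * (1 - (α - ε)) ≤ 1 / 4 := by nlinarith [sq_nonneg (1 - 2 * (α - ε))]
  have hq2 : (α + ε) * (1 - (α + ε)) ≤ 1 / 4 := by nlinarith [sq_nonneg (1 - 2 * (α + ε))]
  have hc₁lb : 3 / 4 * (N * ε) ≤ c₁ := by rw [hc₁]; nlinarith
  have ht1 : (N : ℝ) * ((α - ε) * (1 - (α - ε))) / c₁ ^ 2 ≤ 4 / (9 * N * ε ^ 2) := by
    rw [div_le_div_iff₀ (by positivity) (by positivity)]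
    have h1 : (9 : ℝ) / 16 * (N * ε) ^ 2 ≤ c₁ ^ 2 := by nlinarith
    nlinarith [mul_le_mul_of_nonneg_left h1 (show (0:ℝ) ≤ 9 * N * ε ^ 2 * ((N:ℝ) * (1/4)) by positivity)]
  have ht2 : (N : ℝ) * ((α + ε) * (1 - (α + ε))) / c₂ ^ 2 ≤ 1 / (4 * N * ε ^ 2) := by
    rw [hc₂, div_le_div_iff₀ (by positivity) (by positivity)]
    nlinarith
  have hD : (0:ℝ) < (N:ℝ) * ε ^ 2 := by positivity
  have : 4 / (9 * (N:ℝ) * ε ^ 2) + 1 / (4 * N * ε ^ 2) ≤ 5 / (4 * N * ε ^ 2) := by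
    have e1 : 4 / (9 * (N:ℝ) * ε ^ 2) ≤ 20 / (36 * ((N:ℝ) * ε ^ 2)) := by
      rw [div_le_div_iff₀ (by linarith [hD]) (by linarith [hD])]
      nlinarith
    have e2 : 1 / (4 * (N:ℝ) * ε ^ 2) = 9 / (36 * ((N:ℝ) * ε ^ 2)) := by
      rw [div_eq_div_iff (by linarith [hD]) (by linarith [hD])]
      ring
    have e3 : 5 / (4 * (N:ℝ) * ε ^ 2) = 45 / (36 * ((N:ℝ) * ε ^ 2)) := by
      rw [div_eq_div_iff (by linarith [hD]) (by linarith [hD])]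
      ring
    rw [e2, e3]
    have : (20:ℝ) / (36 * ((N:ℝ) * ε ^ 2)) + 9 / (36 * ((N:ℝ) * ε ^ 2))
        ≤ 45 / (36 * ((N:ℝ) * ε ^ 2)) := by
      rw [← add_div]
      gcongr
      all_goals first | positivity | norm_num
    linarith [e1, this]
  linarith
end
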